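/- arXiv:1204.5205 — 16 statements merged into one kernel-verified Lean document; each statement's English description precedes it below -/
import Mathlib

section
/- Let R be a (possibly noncommutative) ring and let I be a right ideal of the polynomial ring S = R[x]. If the right annihilator r_S(I) = {g ∈ S : fg = 0 for all f ∈ I} is nonzero, then r_R(I) = {c ∈ R : fc = 0 for all f ∈ I} is nonzero. (This is the σ = id instance of the paper's main theorem on R[x;σ]; for σ = id the hypotheses 'r_S(I) is σ-stable' and 'R is σ-compatible' hold automatically.) -/
open Polynomial

/-- **A generalization of McCoy's theorem** (σ = id instance).
Let `R` be a ring and `I` a right ideal of `S = R[x]` (an additive subgroup closed under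
right multiplication by `S`).  If the right annihilator of `I` in `S` is nonzero, then the
right annihilator of `I` in `R` is nonzero. -/
theorem rightAnn_ne_zero_of_rightAnn_polynomial_ne_zero
    (R : Type*) [Ring R] (I : Set (Polynomial R))
    (hzero : (0 : Polynomial R) ∈ I)
    (hadd : ∀ f ∈ I, ∀ g ∈ I, f + g ∈ I)
    (hneg : ∀ f ∈ I, -f ∈ I)
    (hmul : ∀ f ∈ I, ∀ s : Polynomial R, f * s ∈ I)
    (hann : ∃ g : Polynomial R, g ≠ 0 ∧ ∀ f ∈ I, f * g = 0) :
    ∃ c : R, c ≠ 0 ∧ ∀ f ∈ I, f * Polynomial.C c = 0 := by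
  classical
  -- A = right annihilator of I in R[x]; it is a left ideal
  set A : Set (Polynomial R) := {g | ∀ f ∈ I, f * g = 0} with hA
  have hAleft : ∀ g ∈ A, ∀ s : Polynomial R, s * g ∈ A := by
    intro g hg s f hf
    rw [← mul_assoc]
    exact hg _ (hmul f hf s)
  obtain ⟨g₀, hg₀ne, hg₀⟩ := hann
  -- choose g in A, nonzero, of minimal natDegree
  have hne : ∃ k, ∃ g : Polynomial R, g ≠ 0 ∧ g ∈ A ∧ g.natDegree = k :=
    ⟨g₀.natDegree, g₀, hg₀ne, hg₀, rfl⟩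
  obtain ⟨g, hgne, hgA, hgdeg⟩ := Nat.find_spec hne
  have hmin : ∀ h ∈ A, h ≠ 0 → g.natDegree ≤ h.natDegree := by
    intro h hh hhne
    rw [hgdeg]
    exact Nat.find_le ⟨h, hhne, hh, rfl⟩
  -- key: for any f with f*g = 0, every coefficient a of f satisfies C a * g = 0
  have key : ∀ d : ℕ, ∀ f : Polynomial R, f.natDegree ≤ d → f * g = 0 →
      ∀ i, C (f.coeff i) * g = 0 := by
    intro d
    induction d with
    | zero =>
      intro f hfd hfg i
      by_cases hi : i = 0
      · subst hi
        have hf : f = C (f.coeff 0) := (Polynomial.eq_C_of_natDegree_le_zero hfd)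
        rw [← hf]; exact hfg
      · rw [Polynomial.coeff_eq_zero_of_natDegree_lt (by omega), map_zero, zero_mul]
    | succ d ih =>
      intro f hfd hfg i
      by_cases hf0 : f = 0
      · simp [hf0]
      -- leading coefficient kills leadingCoeff g
      have htop : f.leadingCoeff * g.leadingCoeff = 0 := by
        have := Polynomial.coeff_mul_degree_add_degree f g
        rw [hfg, Polynomial.coeff_zero] at this
        exact this.symm
      -- hence C (leadingCoeff f) * g = 0 by minimality
      have hlead : C f.leadingCoeff * g = 0 := by
        by_contra hne0
        have hmem : C f.leadingCoeff * g ∈ A := hAleft g hgA _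
        have hle : g.natDegree ≤ (C f.leadingCoeff * g).natDegree := hmin _ hmem hne0
        have hge : (C f.leadingCoeff * g).natDegree ≤ g.natDegree := by
          calc (C f.leadingCoeff * g).natDegree
              ≤ (C f.leadingCoeff).natDegree + g.natDegree := Polynomial.natDegree_mul_le
            _ = g.natDegree := by rw [Polynomial.natDegree_C, zero_add]
        have heq : (C f.leadingCoeff * g).natDegree = g.natDegree := le_antisymm hge hle
        have hc : (C f.leadingCoeff * g).coeff g.natDegree = 0 := by
          rw [Polynomial.coeff_C_mul]
          exact htop
        exact hne0 (Polynomial.leadingCoeff_eq_zero.mp (by rw [Polynomial.leadingCoeff, heq, hc]) )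
      -- erase leading term
      by_cases hm : f.natDegree = 0
      · by_cases hi : i = 0
        · subst hi
          have hf : f = C (f.coeff 0) := Polynomial.eq_C_of_natDegree_le_zero (le_of_eq hm)
          rw [← hf]; exact hfg
        · rw [Polynomial.coeff_eq_zero_of_natDegree_lt (by omega), map_zero, zero_mul]
      · have herase : f.eraseLead * g = 0 := by
          have : f.eraseLead = f - C f.leadingCoeff * X ^ f.natDegree := by
            rw [eq_sub_iff_add_eq, Polynomial.eraseLead_add_C_mul_X_pow]
          rw [this, sub_mul, hfg, zero_sub, neg_eq_zero, mul_assoc,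
            (Polynomial.X_pow_mul (R := R) (n := f.natDegree)), ← mul_assoc, hlead, zero_mul]
        have hdeg' : f.eraseLead.natDegree ≤ d := by
          have h1 : f.eraseLead.natDegree ≤ f.natDegree - 1 := Polynomial.eraseLead_natDegree_le f
          omega
        have := ih f.eraseLead hdeg' herase
        by_cases hi : i = f.natDegree
        · subst hi; exact hlead
        · have hc : f.eraseLead.coeff i = f.coeff i := by
            rw [Polynomial.eraseLead_coeff, if_neg hi]
          rw [← hc]; exact this i
  -- apply with c = leadingCoeff g
  refine ⟨g.leadingCoeff, fun h => hgne (Polynomial.leadingCoeff_eq_zero.mp h), ?_⟩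
  intro f hf
  have hfg : f * g = 0 := hgA f hf
  have := key f.natDegree f le_rfl hfg
  ext k
  rw [Polynomial.coeff_mul_C, Polynomial.coeff_zero]
  have h := this k
  have : (C (f.coeff k) * g).coeff g.natDegree = 0 := by rw [h]; simp
  rwa [Polynomial.coeff_C_mul] at this
end

section
/- Let R be a (possibly noncommutative) ring and f(x) ∈ R[x]. If there exists a nonzero g(x) ∈ R[x] with f(x)h(x)g(x) = 0 for all h(x) ∈ R[x], then there exists a nonzero c ∈ R with f(x)h(x)c = 0 for all h(x) ∈ R[x]. Equivalently, if r_{R[x]}(f(x)R[x]) ≠ 0 then r_{R[x]}(f(x)R[x]) ∩ R ≠ 0. -/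
open Polynomial

/-- If the right annihilator of the right ideal `f(x)R[x]` of `R[x]` is nonzero, then it
contains a nonzero constant: from a nonzero `g(x)` with `f(x)h(x)g(x) = 0` for all
`h(x) ∈ R[x]`, one obtains a nonzero `c ∈ R` with `f(x)h(x)c = 0` for all `h(x) ∈ R[x]`. -/
theorem rightAnn_principal_right_ideal_meets_R
    (R : Type*) [Ring R] (f : Polynomial R)
    (hann : ∃ g : Polynomial R, g ≠ 0 ∧ ∀ h : Polynomial R, f * h * g = 0) :
    ∃ c : R, c ≠ 0 ∧ ∀ h : Polynomial R, f * h * Polynomial.C c = 0 := by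
  classical
  have hex : ∃ n : ℕ, ∃ g : Polynomial R, g.natDegree = n ∧ g ≠ 0 ∧ ∀ h, f * h * g = 0 := by
    obtain ⟨g, hg0, hgann⟩ := hann
    exact ⟨g.natDegree, g, rfl, hg0, hgann⟩
  set n := Nat.find hex with hn
  obtain ⟨g, hdeg, hg0, hgann⟩ := Nat.find_spec hex
  rw [← hn] at hdeg
  have hmin : ∀ g' : Polynomial R, g' ≠ 0 → (∀ h, f * h * g' = 0) → n ≤ g'.natDegree :=
    fun g' h0 hann' => Nat.find_min' hex ⟨g', rfl, h0, hann'⟩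
  -- Step: if `r` kills the top coefficient of `g`, then `r` kills `g` entirely.
  have step : ∀ r : R, r * g.coeff n = 0 → C r * g = 0 := by
    intro r hr
    by_contra hne
    have hannr : ∀ h, f * h * (C r * g) = 0 := by
      intro h
      rw [← mul_assoc, mul_assoc f h (C r)]
      exact hgann (h * C r)
    have hle : (C r * g).natDegree ≤ n := by
      refine le_trans natDegree_mul_le ?_
      simp [hdeg]
    have hcoeff : (C r * g).coeff n = 0 := by simpa [coeff_C_mul] using hr
    have hge := hmin _ hne hannr
    have heq : (C r * g).natDegree = n := le_antisymm hle hge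
    have : (C r * g).leadingCoeff = 0 := by
      rw [leadingCoeff, heq]; exact hcoeff
    exact hne (leadingCoeff_eq_zero.mp this)
  -- Key: every coefficient of `f * h` kills `g` entirely.
  have key : ∀ h : Polynomial R, ∀ d i : ℕ, (f * h).natDegree < i + d →
      C ((f * h).coeff i) * g = 0 := by
    intro h d
    induction d with
    | zero =>
      intro i hi
      rw [coeff_eq_zero_of_natDegree_lt (by omega : (f * h).natDegree < i)]
      simp
    | succ d ih =>
      intro i hi
      apply step
      have hqg : (f * h * g).coeff (i + n) = 0 := by rw [hgann h]; simp
      rw [coeff_mul] at hqg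
      rw [← hqg]
      symm
      apply Finset.sum_eq_single (i, n)
      · rintro ⟨a, b⟩ hab hne
        rw [Finset.HasAntidiagonal.mem_antidiagonal] at hab
        rcases lt_or_ge i a with hia | hia
        · have hza : C ((f * h).coeff a) * g = 0 := ih a (by omega)
          have := congrArg (fun p => Polynomial.coeff p b) hza
          simpa [coeff_C_mul] using this
        · have hab' : a < i := by
            rcases lt_or_eq_of_le hia with h' | h'
            · exact h'
            · exact absurd (by simp [h', show b = n by omega]) hne
          have hgb : g.coeff b = 0 := coeff_eq_zero_of_natDegree_lt (by omega)
          rw [hgb, mul_zero]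
      · intro hni
        simp at hni
  -- Extract a nonzero coefficient of g.
  obtain ⟨b, hb⟩ : ∃ b, g.coeff b ≠ 0 := by
    by_contra hall
    push_neg at hall
    exact hg0 (Polynomial.ext fun m => by simp [hall m])
  refine ⟨g.coeff b, hb, fun h => ?_⟩
  apply Polynomial.ext
  intro i
  have hz : C ((f * h).coeff i) * g = 0 := key h ((f * h).natDegree + 1) i (by omega)
  have := congrArg (fun p => Polynomial.coeff p b) hz
  simpa [coeff_C_mul, coeff_mul_C] using this
end

section
/- Let R be a ring. If the polynomial ring R[x] is semicommutative, then R is right McCoy. -/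
open Polynomial

/-- A ring is semicommutative if `a * b = 0` implies `a * r * b = 0` for every `r`. -/
def IsSemicommutativeRing (S : Type*) [Ring S] : Prop :=
  ∀ a b : S, a * b = 0 → ∀ r : S, a * r * b = 0

/-- A ring is right McCoy if whenever nonzero polynomials `f, g` over it satisfy
`f * g = 0`, there is a nonzero constant `c` with `f * C c = 0`. -/
def IsRightMcCoyRing (S : Type*) [Ring S] : Prop :=
  ∀ f g : Polynomial S, f ≠ 0 → g ≠ 0 → f * g = 0 →
    ∃ c : S, c ≠ 0 ∧ f * Polynomial.C c = 0

/-- If the polynomial ring `R[x]` is semicommutative, then `R` is right McCoy. -/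
theorem rightMcCoy_of_semicommutative_polynomial
    (R : Type*) [Ring R] (h : IsSemicommutativeRing (Polynomial R)) :
    IsRightMcCoyRing R := by
  classical
  intro f g hf hg hfg
  have hex : ∃ n, ∃ p : Polynomial R, p ≠ 0 ∧ f * p = 0 ∧ p.natDegree = n :=
    ⟨g.natDegree, g, hg, hfg, rfl⟩
  set n := Nat.find hex with hn
  obtain ⟨p, hp0, hfp, hpn⟩ := Nat.find_spec hex
  have hmin : ∀ q : Polynomial R, q ≠ 0 → f * q = 0 → n ≤ q.natDegree := by
    intro q hq0 hfq
    by_contra hlt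
    push_neg at hlt
    exact Nat.find_min hex hlt ⟨q, hq0, hfq, rfl⟩
  have hbn : p.coeff n = p.leadingCoeff := by rw [leadingCoeff, hpn]
  have hbne : p.coeff n ≠ 0 := by
    rw [hbn]; exact leadingCoeff_ne_zero.mpr hp0
  -- key downward induction
  have key : ∀ d i, f.natDegree < i + d → C (f.coeff i) * p = 0 := by
    intro d
    induction d with
    | zero =>
      intro i hi
      rw [coeff_eq_zero_of_natDegree_lt (by omega : f.natDegree < i)]
      simp
    | succ d ih =>
      intro i hi
      rcases lt_or_ge f.natDegree (i + d) with hlt | hge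
      · exact ih i hlt
      have hQ : ∀ j, i < j → C (f.coeff j) * p = 0 := fun j hj => ih j (by omega)
      have hab : f.coeff i * p.coeff n = 0 := by
        have h0 : (f * p).coeff (i + n) = 0 := by rw [hfp]; simp
        rw [coeff_mul] at h0
        rw [Finset.sum_eq_single (i, n)] at h0
        · exact h0
        · rintro ⟨u, v⟩ huv hne
          rw [Finset.HasAntidiagonal.mem_antidiagonal] at huv
          rcases lt_trichotomy u i with hu | hu | hu
          · have hv : p.natDegree < v := by omega
            rw [coeff_eq_zero_of_natDegree_lt hv, mul_zero]
          · exfalso; apply hne; simp [hu]; omega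
          · have := hQ u hu
            have h2 : (C (f.coeff u) * p).coeff v = 0 := by rw [this]; simp
            rwa [coeff_C_mul] at h2
        · intro habs
          simp [Finset.HasAntidiagonal.mem_antidiagonal] at habs
      -- show C (f.coeff i) * p = 0
      set q := C (f.coeff i) * p with hq
      have hfq : f * q = 0 := by
        rw [hq, ← mul_assoc]
        exact h f p hfp (C (f.coeff i))
      have hqc : ∀ k, n ≤ k → q.coeff k = 0 := by
        intro k hk
        rw [hq, coeff_C_mul]
        rcases eq_or_lt_of_le hk with hk' | hk'
        · rw [← hk']; exact hab
        · rw [coeff_eq_zero_of_natDegree_lt (by omega : p.natDegree < k), mul_zero]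
      by_contra hq0
      have h1 : n ≤ q.natDegree := hmin q hq0 hfq
      have h2 : q.coeff q.natDegree ≠ 0 := by
        rw [← leadingCoeff]; exact leadingCoeff_ne_zero.mpr hq0
      exact h2 (hqc _ h1)
  refine ⟨p.coeff n, hbne, ?_⟩
  ext k
  rw [coeff_mul_C]
  have := key (f.natDegree + 1) k (by omega)
  have h2 : (C (f.coeff k) * p).coeff n = 0 := by rw [this]; simp
  rwa [coeff_C_mul] at h2
end

section
/- Let R be a ring. If the polynomial ring R[x] is reversible, then R is right McCoy. (This is the σ = id instance of the corollary: if R[x;σ] is reversible then R is σ-skew McCoy.) -/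
/-- A ring is reversible if `a * b = 0` implies `b * a = 0`. -/
def IsReversibleRing (S : Type*) [Ring S] : Prop :=
  ∀ a b : S, a * b = 0 → b * a = 0

/-- Reversible rings are semicommutative. -/
lemma semicomm_of_reversible {S : Type*} [Ring S] (h : IsReversibleRing S)
    (a b r : S) (hab : a * b = 0) : a * r * b = 0 := by
  have h1 : b * a = 0 := h a b hab
  have h2 : b * (a * r) = 0 := by rw [← mul_assoc, h1, zero_mul]
  exact h b (a * r) h2

/-- If the polynomial ring `R[x]` is reversible, then `R` is right McCoy. -/
theorem rightMcCoy_of_reversible_polynomial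
    (R : Type*) [Ring R] (h : IsReversibleRing (Polynomial R)) :
    IsRightMcCoyRing R := by
  classical
  intro f g hf hg hfg
  -- the set of degrees of nonzero right annihilators of f
  set S : Set ℕ := {m | ∃ q : Polynomial R, q ≠ 0 ∧ f * q = 0 ∧ q.natDegree = m} with hS
  have hSne : S.Nonempty := ⟨g.natDegree, g, hg, hfg, rfl⟩
  obtain ⟨q, hq0, hfq, hqm⟩ := Nat.sInf_mem hSne
  set m := sInf S with hm
  have hlead : q.coeff m ≠ 0 := by
    rw [← hqm]
    exact Polynomial.leadingCoeff_ne_zero.mpr hq0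
  by_cases hall : ∀ i, Polynomial.C (f.coeff i) * q = 0
  · -- every coefficient of f annihilates q; use leading coefficient of q
    refine ⟨q.coeff m, hlead, ?_⟩
    ext n
    rw [Polynomial.coeff_mul_C, Polynomial.coeff_zero]
    have := congrArg (fun p => Polynomial.coeff p m) (hall n)
    simpa [Polynomial.coeff_C_mul] using this
  · push_neg at hall
    obtain ⟨i, hi⟩ := hall
    have hile : i ≤ f.natDegree := by
      by_contra hgt
      push_neg at hgt
      have : f.coeff i = 0 := Polynomial.coeff_eq_zero_of_natDegree_lt hgt
      simp [this] at hi
    set P : ℕ → Prop := fun j => Polynomial.C (f.coeff j) * q ≠ 0 with hP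
    set k := Nat.findGreatest P f.natDegree with hk
    have hPk : P k := Nat.findGreatest_spec hile hi
    have hgtk : ∀ j, k < j → Polynomial.C (f.coeff j) * q = 0 := by
      intro j hj
      by_cases hjle : j ≤ f.natDegree
      · have := Nat.findGreatest_is_greatest hj hjle
        rw [hP] at this
        exact not_not.mp this
      · push_neg at hjle
        have : f.coeff j = 0 := Polynomial.coeff_eq_zero_of_natDegree_lt hjle
        simp [this]
    -- coefficient computation: f.coeff k * q.coeff m = 0
    have hcoeffzero : ∀ j n, k < j → f.coeff j * q.coeff n = 0 := by
      intro j n hj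
      have := congrArg (fun p => Polynomial.coeff p n) (hgtk j hj)
      simpa [Polynomial.coeff_C_mul] using this
    have hkm : f.coeff k * q.coeff m = 0 := by
      have hco : (f * q).coeff (k + m) = 0 := by rw [hfq]; simp
      rw [Polynomial.coeff_mul] at hco
      rw [Finset.sum_eq_single (k, m)] at hco
      · exact hco
      · rintro ⟨u, v⟩ hmem hne
        rw [Finset.HasAntidiagonal.mem_antidiagonal] at hmem
        rcases lt_trichotomy u k with hu | hu | hu
        · have hv : m < v := by omega
          have : q.coeff v = 0 := Polynomial.coeff_eq_zero_of_natDegree_lt (by omega)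
          simp [this]
        · exfalso; apply hne; simp [hu] at hmem ⊢; omega
        · exact hcoeffzero u v hu
      · intro hnotmem
        exfalso
        exact hnotmem (Finset.HasAntidiagonal.mem_antidiagonal.mpr rfl)
    -- q' := C (f.coeff k) * q is a nonzero annihilator of smaller degree
    set q' := Polynomial.C (f.coeff k) * q with hq'
    have hq'ne : q' ≠ 0 := hPk
    have hfq' : f * q' = 0 := by
      rw [hq', ← mul_assoc]
      exact semicomm_of_reversible h f q (Polynomial.C (f.coeff k)) hfq
    have hq'le : q'.natDegree ≤ m := by
      calc q'.natDegree ≤ (Polynomial.C (f.coeff k)).natDegree + q.natDegree :=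
            Polynomial.natDegree_mul_le
        _ = m := by simp [hqm]
    have hq'coeff : q'.coeff m = 0 := by
      rw [hq', Polynomial.coeff_C_mul]; exact hkm
    have hq'lt : q'.natDegree < m := by
      rcases lt_or_eq_of_le hq'le with hlt | heq
      · exact hlt
      · exfalso
        have : q'.coeff q'.natDegree ≠ 0 := Polynomial.leadingCoeff_ne_zero.mpr hq'ne
        rw [heq] at this
        exact this hq'coeff
    have : q'.natDegree ∈ S := ⟨q', hq'ne, hfq', rfl⟩
    have := Nat.sInf_le this
    omega
end

section
/- Let R be a semicommutative ring. If the polynomial ring R[x] is quasi-Baer, then R is quasi-Baer. (This is the σ = id instance of the paper's proposition: if R is σ-semicommutative and R[x;σ] is quasi-Baer then R is quasi-Baer.) -/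
/-- A right ideal of a possibly noncommutative ring: an additive subgroup closed under
right multiplication by arbitrary ring elements. -/
def IsRightIdeal {S : Type*} [Ring S] (I : Set S) : Prop :=
  (0 : S) ∈ I ∧ (∀ a ∈ I, ∀ b ∈ I, a + b ∈ I) ∧ (∀ a ∈ I, -a ∈ I) ∧
    (∀ a ∈ I, ∀ s : S, a * s ∈ I)

/-- A ring is quasi-Baer if the right annihilator of every right ideal equals `eS` for
some idempotent `e`. -/
def IsQuasiBaerRing (S : Type*) [Ring S] : Prop :=
  ∀ I : Set S, IsRightIdeal I →
    ∃ e : S, e * e = e ∧ {c : S | ∀ a ∈ I, a * c = 0} = {x : S | ∃ r : S, x = e * r}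

/-- If `R` is semicommutative and `R[x]` is quasi-Baer, then `R` is quasi-Baer. -/
theorem quasiBaer_of_quasiBaer_polynomial
    (R : Type*) [Ring R] (hsc : IsSemicommutativeRing R)
    (hqb : IsQuasiBaerRing (Polynomial R)) :
    IsQuasiBaerRing R := by
  intro I hI
  obtain ⟨h0, hadd, hneg, hmulr⟩ := hI
  set J : Set (Polynomial R) := {f | ∀ k, f.coeff k ∈ I} with hJdef
  have hJ : IsRightIdeal J := by
    refine ⟨fun k => by simpa using h0,
      fun a ha b hb k => by simpa using hadd _ (ha k) _ (hb k),
      fun a ha k => by simpa using hneg _ (ha k),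
      fun f hf s k => ?_⟩
    rw [Polynomial.coeff_mul]
    exact Finset.sum_induction _ (· ∈ I) (fun x y hx hy => hadd _ hx _ hy) h0
      (fun p _ => hmulr _ (hf p.1) _)
  obtain ⟨e, he2, heq⟩ := hqb J hJ
  have heJ : ∀ f ∈ J, f * e = 0 := by
    have : e ∈ {x : Polynomial R | ∃ r, x = e * r} := ⟨1, (mul_one e).symm⟩
    rw [← heq] at this
    exact this
  have hae : ∀ a ∈ I, ∀ k, a * e.coeff k = 0 := by
    intro a ha k
    have hCa : (Polynomial.C a) ∈ J := by
      intro n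
      rw [Polynomial.coeff_C]
      split <;> [exact ha; exact h0]
    have h := heJ _ hCa
    have := congrArg (fun f => Polynomial.coeff f k) h
    simpa [Polynomial.coeff_C_mul] using this
  refine ⟨e.coeff 0, ?_, ?_⟩
  · have := congrArg (fun f => Polynomial.coeff f 0) he2
    simpa [Polynomial.mul_coeff_zero] using this
  · ext c
    constructor
    · intro hc
      have hCc : Polynomial.C c ∈ {x : Polynomial R | ∃ r, x = e * r} := by
        rw [← heq]
        intro f hf
        ext n
        simp [Polynomial.coeff_mul_C, hc _ (hf n)]
      obtain ⟨r, hr⟩ := hCc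
      refine ⟨r.coeff 0, ?_⟩
      have := congrArg (fun f => Polynomial.coeff f 0) hr
      simpa [Polynomial.mul_coeff_zero] using this
    · rintro ⟨r, rfl⟩ a ha
      rw [← mul_assoc, hae a ha 0, zero_mul]
end

section
/- Let R be a ring and σ a ring endomorphism of R. Suppose R is semicommutative and satisfies the condition (C_σ^2): for all a, b ∈ R, a·σ(b)·b = 0 implies a·σ(b) = 0. Then R is σ-skew McCoy: for any n, m ∈ ℕ and coefficients a_0, …, a_n ∈ R (not all zero) and b_0, …, b_m ∈ R (not all zero), if Σ_{i+j=k} a_i·σ^i(b_j) = 0 for every k (i.e. (Σ_i a_i x^i)(Σ_j b_j x^j) = 0 in the skew polynomial ring R[x;σ]), then there exists a nonzero c ∈ R with a_i·σ^i(c) = 0 for all i (i.e. (Σ_i a_i x^i)·c = 0 in R[x;σ]). -/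
/-- If `R` is a semicommutative ring satisfying the condition `(C_σ^2)`
(`a * σ b * b = 0` implies `a * σ b = 0`), then `R` is `σ`-skew McCoy.
Skew polynomials over `R[x;σ]` are encoded by their coefficient sequences: the `k`-th
coefficient of a product is `∑_{i+j=k} a i * σ^[i] (b j)`, and the coefficients of
`p(x) * c` are `a i * σ^[i] c`. -/
theorem sigmaSkewMcCoy_of_semicommutative_C2
    (R : Type*) [Ring R] (σ : R →+* R)
    (hsemi : ∀ a b : R, a * b = 0 → ∀ r : R, a * r * b = 0)
    (hC2 : ∀ a b : R, a * σ b * b = 0 → a * σ b = 0)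
    (n m : ℕ) (a b : ℕ → R)
    (ha : ∀ i, n < i → a i = 0) (hb : ∀ j, m < j → b j = 0)
    (hane : ∃ i, a i ≠ 0) (hbne : ∃ j, b j ≠ 0)
    (hmul : ∀ k : ℕ, ∑ ij ∈ Finset.HasAntidiagonal.antidiagonal k, a ij.1 * (⇑σ)^[ij.1] (b ij.2) = 0) :
    ∃ c : R, c ≠ 0 ∧ ∀ i, a i * (⇑σ)^[i] c = 0 := by
  have step : ∀ x y : R, x * y = 0 → x * σ y = 0 := fun x y h =>
    hC2 x y (hsemi x y h (σ y))
  have iter : ∀ (k : ℕ) (x y : R), x * y = 0 → x * (⇑σ)^[k] y = 0 := by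
    intro k
    induction k with
    | zero => intro x y h; simpa using h
    | succ k ih =>
      intro x y h
      rw [Function.iterate_succ_apply']
      exact step x _ (ih x y h)
  have mono : ∀ (i j : ℕ) (x y : R), i ≤ j → x * (⇑σ)^[i] y = 0 → x * (⇑σ)^[j] y = 0 := by
    intro i j x y hij h
    have e : (⇑σ)^[j] y = (⇑σ)^[j - i] ((⇑σ)^[i] y) := by
      rw [← Function.iterate_add_apply, Nat.sub_add_cancel hij]
    rw [e]; exact iter _ x _ h
  have main : ∀ k i j : ℕ, i + j = k → a i * (⇑σ)^[i] (b j) = 0 := by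
    intro k
    induction k using Nat.strong_induction_on with
    | _ k IH =>
      have key : ∀ t : ℕ, ∀ i j, i + j = k → j ≤ t → a i * (⇑σ)^[i] (b j) = 0 := by
        intro t
        induction t using Nat.strong_induction_on with
        | _ t IHt =>
          intro i j hij hjt
          rcases lt_or_eq_of_le hjt with hlt | heq
          · exact IHt j hlt i j hij le_rfl
          subst heq
          rcases Nat.eq_zero_or_pos i with hi0 | hipos
          · -- i = 0, j = k : the sum reduces to the single term a 0 * b k
            subst hi0
            have hsum := hmul k
            have hmem : ((0 : ℕ), j) ∈ Finset.HasAntidiagonal.antidiagonal k :=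
              Finset.HasAntidiagonal.mem_antidiagonal.2 hij
            have := Finset.sum_eq_single_of_mem _ hmem
              (f := fun ij : ℕ × ℕ => a ij.1 * (⇑σ)^[ij.1] (b ij.2))
              (by
                intro pq hpq hne
                have hpqk : pq.1 + pq.2 = k := Finset.HasAntidiagonal.mem_antidiagonal.1 hpq
                have hq : pq.2 < j := by
                  rcases Nat.lt_or_ge pq.2 j with h | h
                  · exact h
                  · exfalso; apply hne
                    have : pq.2 = j := le_antisymm (by omega) h
                    have h1 : pq.1 = 0 := by omega
                    exact Prod.ext h1 this
                exact IHt pq.2 hq pq.1 pq.2 hpqk le_rfl)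
            rw [this] at hsum
            simpa using hsum
          · -- i ≥ 1 : multiply the k-th coefficient identity by σ^[i-1] (b j)
            set c := (⇑σ)^[i - 1] (b j) with hc
            have hsum := hmul k
            have hsum' : ∑ ij ∈ Finset.HasAntidiagonal.antidiagonal k,
                (a ij.1 * (⇑σ)^[ij.1] (b ij.2)) * c = 0 := by
              rw [← Finset.sum_mul, hsum, zero_mul]
            have hmem : ((i : ℕ), j) ∈ Finset.HasAntidiagonal.antidiagonal k :=
              Finset.HasAntidiagonal.mem_antidiagonal.2 hij
            have hterm := Finset.sum_eq_single_of_mem _ hmem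
              (f := fun ij : ℕ × ℕ => (a ij.1 * (⇑σ)^[ij.1] (b ij.2)) * c)
              (by
                intro pq hpq hne
                have hpqk : pq.1 + pq.2 = k := Finset.HasAntidiagonal.mem_antidiagonal.1 hpq
                rcases Nat.lt_or_ge pq.2 j with hq | hq
                · -- smaller second index: term already zero
                  rw [IHt pq.2 hq pq.1 pq.2 hpqk le_rfl, zero_mul]
                · have hqj : j < pq.2 := by
                    rcases Nat.lt_or_ge j pq.2 with h | h
                    · exact h
                    · exfalso; apply hne
                      have h2 : pq.2 = j := le_antisymm h hq
                      have h1 : pq.1 = i := by omega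
                      exact Prod.ext h1 h2
                  -- then pq.1 + j < k, so a pq.1 * σ^[pq.1] (b j) = 0
                  have h0 : a pq.1 * (⇑σ)^[pq.1] (b j) = 0 :=
                    IH (pq.1 + j) (by omega) pq.1 j rfl
                  have h1 : a pq.1 * c = 0 := mono pq.1 (i - 1) _ _ (by omega) h0
                  have := hsemi (a pq.1) c h1 ((⇑σ)^[pq.1] (b pq.2))
                  simpa [mul_assoc] using this)
            rw [hterm] at hsum'
            dsimp only at hsum'
            have hii : (⇑σ)^[i] (b j) = σ c := by
              rw [hc, ← Function.iterate_succ_apply' σ (i - 1) (b j)]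
              congr 1
              omega
            rw [hii] at hsum' ⊢
            exact hC2 (a i) c hsum'
      intro i j hij
      exact key j i j hij le_rfl
  obtain ⟨j, hj⟩ := hbne
  exact ⟨b j, hj, fun i => main (i + j) i j rfl⟩
end

section
/- Let R be a ring and σ a ring endomorphism of R. Suppose R is reduced and right σ-reversible. Then R is σ-skew McCoy: for any n, m ∈ ℕ and coefficients a_0, …, a_n ∈ R (not all zero) and b_0, …, b_m ∈ R (not all zero), if Σ_{i+j=k} a_i·σ^i(b_j) = 0 for every k (i.e. (Σ_i a_i x^i)(Σ_j b_j x^j) = 0 in the skew polynomial ring R[x;σ]), then there exists a nonzero c ∈ R with a_i·σ^i(c) = 0 for all i (i.e. (Σ_i a_i x^i)·c = 0 in R[x;σ]). -/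
section Aux

variable {R : Type*} [Ring R] [IsReduced R]

private lemma aux_comm {a b : R} (h : a * b = 0) : b * a = 0 := by
  have h2 : (b * a) ^ 2 = 0 := by
    rw [sq]
    calc b * a * (b * a) = b * (a * b) * a := by simp only [mul_assoc]
    _ = 0 := by rw [h, mul_zero, zero_mul]
  exact IsNilpotent.eq_zero ⟨2, h2⟩

private lemma aux_mid {a b : R} (h : a * b = 0) (r : R) : a * r * b = 0 := by
  have hba := aux_comm h
  have h2 : (a * r * b) ^ 2 = 0 := by
    rw [sq]
    calc a * r * b * (a * r * b) = a * r * (b * a * (r * b)) := by simp only [mul_assoc]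
    _ = 0 := by rw [hba, zero_mul, mul_zero]
  exact IsNilpotent.eq_zero ⟨2, h2⟩

private lemma aux_sq {a b : R} (h : a * b * b = 0) : a * b = 0 := by
  have hba : b * (a * b) = 0 := aux_comm h
  have h2 : (a * b) ^ 2 = 0 := by
    rw [sq]
    calc a * b * (a * b) = a * (b * (a * b)) := by simp only [mul_assoc]
    _ = 0 := by rw [hba, mul_zero]
  exact IsNilpotent.eq_zero ⟨2, h2⟩

private lemma aux_shift (σ : R →+* R) (hrev : ∀ a b : R, a * b = 0 → b * σ a = 0)
    {a b : R} (h : a * b = 0) : a * σ b = 0 :=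
  hrev b a (aux_comm h)

private lemma aux_shift_iter (σ : R →+* R) (hrev : ∀ a b : R, a * b = 0 → b * σ a = 0)
    {a b : R} (h : a * b = 0) : ∀ t, a * (⇑σ)^[t] b = 0 := by
  intro t
  induction t with
  | zero => exact h
  | succ t ih =>
      rw [Function.iterate_succ_apply']
      exact aux_shift σ hrev ih

end Aux

/-- If `R` is a reduced, right `σ`-reversible ring (`a * b = 0` implies `b * σ a = 0`),
then `R` is `σ`-skew McCoy.
Skew polynomials over `R[x;σ]` are encoded by their coefficient sequences: the `k`-th
coefficient of a product is `∑_{i+j=k} a i * σ^[i] (b j)`, and the coefficients of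
`p(x) * c` are `a i * σ^[i] c`. -/
theorem sigmaSkewMcCoy_of_reduced_rightSigmaReversible
    (R : Type*) [Ring R] [IsReduced R] (σ : R →+* R)
    (hrev : ∀ a b : R, a * b = 0 → b * σ a = 0)
    (n m : ℕ) (a b : ℕ → R)
    (ha : ∀ i, n < i → a i = 0) (hb : ∀ j, m < j → b j = 0)
    (hane : ∃ i, a i ≠ 0) (hbne : ∃ j, b j ≠ 0)
    (hmul : ∀ k : ℕ, ∑ ij ∈ Finset.HasAntidiagonal.antidiagonal k, a ij.1 * (⇑σ)^[ij.1] (b ij.2) = 0) :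
    ∃ c : R, c ≠ 0 ∧ ∀ i, a i * (⇑σ)^[i] c = 0 := by
  have key : ∀ k : ℕ, ∀ i j : ℕ, i + j = k → a i * (⇑σ)^[i] (b j) = 0 := by
    intro k
    induction k using Nat.strong_induction_on with
    | _ k IH =>
      -- inner induction on j
      suffices h : ∀ j : ℕ, ∀ i : ℕ, i + j = k → a i * (⇑σ)^[i] (b j) = 0 by
        intro i j hij; exact h j i hij
      intro j
      induction j using Nat.strong_induction_on with
      | _ j IH2 =>
        intro i hij
        have hsum : (∑ ij ∈ Finset.HasAntidiagonal.antidiagonal k, a ij.1 * (⇑σ)^[ij.1] (b ij.2))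
            * (⇑σ)^[i] (b j) = 0 := by rw [hmul k, zero_mul]
        rw [Finset.sum_mul] at hsum
        have hsingle : ∑ ij ∈ Finset.HasAntidiagonal.antidiagonal k,
            a ij.1 * (⇑σ)^[ij.1] (b ij.2) * (⇑σ)^[i] (b j)
            = a i * (⇑σ)^[i] (b j) * (⇑σ)^[i] (b j) := by
          apply Finset.sum_eq_single_of_mem (i, j) (Finset.HasAntidiagonal.mem_antidiagonal.2 hij)
          rintro ⟨i', j'⟩ hmem hne
          have hij' : i' + j' = k := Finset.HasAntidiagonal.mem_antidiagonal.1 hmem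
          have hii : i' ≠ i := by
            rintro rfl
            exact hne (by simp [Nat.add_left_cancel (hij'.trans hij.symm)])
          rcases lt_or_gt_of_ne hii with hlt | hgt
          · -- i' < i, so i' + j < k: use outer IH then shift
            have h0 : a i' * (⇑σ)^[i'] (b j) = 0 :=
              IH (i' + j) (by omega) i' j rfl
            have h1 : a i' * (⇑σ)^[i] (b j) = 0 := by
              have := aux_shift_iter σ hrev h0 (i - i')
              rwa [← Function.iterate_add_apply, Nat.sub_add_cancel hlt.le] at this
            exact aux_mid h1 _
          · -- i' > i, so j' < j: inner IH
            have hj' : j' < j := by omega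
            rw [IH2 j' hj' i' hij', zero_mul]
        rw [hsingle] at hsum
        exact aux_sq hsum
  obtain ⟨j0, hj0⟩ := hbne
  exact ⟨b j0, hj0, fun i => key (i + j0) i j0 rfl⟩
end

section
/- Let R = (ℤ/2ℤ) × (ℤ/2ℤ) and let σ : R → R be the ring endomorphism σ(a,b) = (b,a). Then R is not σ-skew McCoy: the polynomials p(x) = (1,0) + (1,0)x and q(x) = (0,1) + (1,0)x in R[x;σ] are nonzero and satisfy p(x)q(x) = 0 (i.e. the skew convolutions Σ_{i+j=k} a_i·σ^i(b_j) vanish for all k, where a_0 = a_1 = (1,0), b_0 = (0,1), b_1 = (1,0)), yet there is no nonzero c ∈ R with a_0·c = 0 and a_1·σ(c) = 0 (i.e. with p(x)c = 0 in R[x;σ]). -/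
/-- The swap endomorphism `σ(a, b) = (b, a)` of `ℤ/2 × ℤ/2`. -/
def swapHom : ZMod 2 × ZMod 2 →+* ZMod 2 × ZMod 2 :=
  (RingHom.snd (ZMod 2) (ZMod 2)).prod (RingHom.fst (ZMod 2) (ZMod 2))

/-- The coefficients of `p(x) = (1,0) + (1,0)x`. -/
def pCoeff : ℕ → ZMod 2 × ZMod 2 := fun i => if i ≤ 1 then (1, 0) else 0

/-- The coefficients of `q(x) = (0,1) + (1,0)x`. -/
def qCoeff : ℕ → ZMod 2 × ZMod 2 := fun j =>
  if j = 0 then (0, 1) else if j = 1 then (1, 0) else 0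

/-- `R = ℤ/2 × ℤ/2` with the swap endomorphism `σ` is not `σ`-skew McCoy: the nonzero
skew polynomials `p(x) = (1,0) + (1,0)x` and `q(x) = (0,1) + (1,0)x` of `R[x;σ]` satisfy
`p(x)q(x) = 0`, but there is no nonzero `c ∈ R` with `p(x)c = 0`.
Skew polynomials are encoded by their coefficient sequences: the `k`-th coefficient of a
product is `∑_{i+j=k} a i * σ^[i] (b j)`, and the coefficients of `p(x) * c` are
`a i * σ^[i] c`. -/
theorem zmod2_sq_not_sigmaSkewMcCoy :
    (∃ i, pCoeff i ≠ 0) ∧ (∃ j, qCoeff j ≠ 0) ∧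
    (∀ k : ℕ, ∑ ij ∈ Finset.HasAntidiagonal.antidiagonal k,
        pCoeff ij.1 * (⇑swapHom)^[ij.1] (qCoeff ij.2) = 0) ∧
    ¬ ∃ c : ZMod 2 × ZMod 2, c ≠ 0 ∧ ∀ i, pCoeff i * (⇑swapHom)^[i] c = 0 := by
  refine ⟨⟨0, by decide⟩, ⟨0, by decide⟩, ?_, ?_⟩
  · intro k
    rw [Finset.Nat.sum_antidiagonal_eq_sum_range_succ_mk]
    match k with
    | 0 => decide
    | 1 => decide
    | 2 => decide
    | (n+3) =>
      apply Finset.sum_eq_zero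
      intro i hi
      rcases le_or_gt i 1 with h | h
      · have hj1 : n + 3 - i ≠ 0 := by omega
        have hj2 : n + 3 - i ≠ 1 := by omega
        simp [qCoeff, hj1, hj2, Function.iterate_fixed (f := ⇑swapHom) (map_zero _) i]
      · simp [pCoeff, Nat.not_le.mpr h]
  · rintro ⟨c, hc, h⟩
    have h0 := h 0
    have h1 := h 1
    simp [pCoeff, swapHom, Prod.ext_iff] at h0 h1
    apply hc
    obtain ⟨c1, c2⟩ := c
    simp_all [Prod.ext_iff]
end

section
/- Let R be a commutative domain, σ a ring endomorphism of R, and M an R-module. Then the Nagata extension R⊕_σM is an Armendariz ring if and only if M is an Armendariz module. -/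
/-- The Nagata extension `R ⊕_σ M` of a commutative ring `R` by an `R`-module `M` along a
ring endomorphism `σ` of `R`: the underlying additive group is `R × M`, with multiplication
`(a, m) * (b, n) = (a * b, σ a • n + b • m)`. -/
@[nolint unusedArguments]
def Nagata (R : Type*) [CommRing R] (σ : R →+* R) (M : Type*)
    [AddCommGroup M] [Module R M] : Type _ := R × M

namespace Nagata

variable {R : Type*} [CommRing R] {σ : R →+* R} {M : Type*} [AddCommGroup M] [Module R M]

instance : AddCommGroup (Nagata R σ M) := inferInstanceAs (AddCommGroup (R × M))

/-- The element `(a, m)` of the Nagata extension. -/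
def mk (a : R) (m : M) : Nagata R σ M := (a, m)

instance : Ring (Nagata R σ M) where
  __ := (inferInstance : AddCommGroup (Nagata R σ M))
  mul x y := (x.1 * y.1, σ x.1 • y.2 + y.1 • x.2)
  one := ((1 : R), (0 : M))
  left_distrib x y z := by
    refine Prod.ext ?_ ?_
    · show x.1 * (y.1 + z.1) = x.1 * y.1 + x.1 * z.1; ring
    · show σ x.1 • (y.2 + z.2) + (y.1 + z.1) • x.2
          = (σ x.1 • y.2 + y.1 • x.2) + (σ x.1 • z.2 + z.1 • x.2)
      rw [smul_add, add_smul]; abel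
  right_distrib x y z := by
    refine Prod.ext ?_ ?_
    · show (x.1 + y.1) * z.1 = x.1 * z.1 + y.1 * z.1; ring
    · show σ (x.1 + y.1) • z.2 + z.1 • (x.2 + y.2)
          = (σ x.1 • z.2 + z.1 • x.2) + (σ y.1 • z.2 + z.1 • y.2)
      rw [map_add, add_smul, smul_add]; abel
  zero_mul x := by
    refine Prod.ext ?_ ?_
    · show (0 : R) * x.1 = 0; ring
    · show σ (0 : R) • x.2 + x.1 • (0 : M) = 0; simp
  mul_zero x := by
    refine Prod.ext ?_ ?_
    · show x.1 * (0 : R) = 0; ring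
    · show σ x.1 • (0 : M) + (0 : R) • x.2 = 0; simp
  mul_assoc x y z := by
    refine Prod.ext ?_ ?_
    · show x.1 * y.1 * z.1 = x.1 * (y.1 * z.1); ring
    · show σ (x.1 * y.1) • z.2 + z.1 • (σ x.1 • y.2 + y.1 • x.2)
          = σ x.1 • (σ y.1 • z.2 + z.1 • y.2) + (y.1 * z.1) • x.2
      rw [map_mul, mul_smul, smul_add, smul_add, mul_smul, smul_comm z.1 (σ x.1),
        smul_comm z.1 y.1]
      abel
  one_mul x := by
    refine Prod.ext ?_ ?_
    · show 1 * x.1 = x.1; ring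
    · show σ 1 • x.2 + x.1 • (0 : M) = x.2; simp
  mul_one x := by
    refine Prod.ext ?_ ?_
    · show x.1 * 1 = x.1; ring
    · show σ x.1 • (0 : M) + (1 : R) • x.2 = x.2; simp

end Nagata

/-- A ring `S` is Armendariz if whenever polynomials over it satisfy `f * g = 0`, all
products of their coefficients vanish. -/
def IsArmendarizRing (S : Type*) [Ring S] : Prop :=
  ∀ f g : Polynomial S, f * g = 0 → ∀ i j, f.coeff i * g.coeff j = 0

/-- An `R`-module `M` is Armendariz if whenever `m(x) f(x) = 0` in the `R[x]`-module
`M[x]`, all the products `a_j • m_i` of coefficients vanish. -/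
def IsArmendarizModule (R M : Type*) [CommRing R] [AddCommGroup M] [Module R M] : Prop :=
  ∀ (m : PolynomialModule R M) (f : Polynomial R), f • m = 0 → ∀ i j, f.coeff j • m.coeff i = 0


namespace Nagata

variable {R : Type*} [CommRing R] {σ : R →+* R} {M : Type*} [AddCommGroup M] [Module R M]

lemma mul_fst' (x y : Nagata R σ M) : (x * y).1 = x.1 * y.1 := rfl

lemma mul_snd' (x y : Nagata R σ M) : (x * y).2 = σ x.1 • y.2 + y.1 • x.2 := rfl

lemma zero_fst' : (0 : Nagata R σ M).1 = 0 := rfl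

lemma zero_snd' : (0 : Nagata R σ M).2 = 0 := rfl

lemma nagata_ext {x y : Nagata R σ M} (h1 : x.1 = y.1) (h2 : x.2 = y.2) : x = y :=
  Prod.ext h1 h2

/-- The first projection as a ring hom. -/
def fstHom (σ : R →+* R) (M : Type*) [AddCommGroup M] [Module R M] : Nagata R σ M →+* R where
  toFun x := x.1
  map_one' := rfl
  map_mul' _ _ := rfl
  map_zero' := rfl
  map_add' _ _ := rfl

/-- The second projection as an additive hom. -/
def sndHom (σ : R →+* R) (M : Type*) [AddCommGroup M] [Module R M] : Nagata R σ M →+ M where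
  toFun x := x.2
  map_zero' := rfl
  map_add' _ _ := rfl

/-- The inclusion of `R` as a ring hom. -/
def inlHom (σ : R →+* R) (M : Type*) [AddCommGroup M] [Module R M] : R →+* Nagata R σ M where
  toFun a := (a, 0)
  map_one' := rfl
  map_mul' a b := by
    refine Prod.ext rfl ?_
    show (0 : M) = σ a • (0 : M) + b • (0 : M)
    simp
  map_zero' := rfl
  map_add' a b := by
    refine Prod.ext rfl ?_
    show (0 : M) = 0 + 0
    simp

end Nagata

/-- If `R` is a commutative domain, the Nagata extension `R ⊕_σ M` is an Armendariz ring
if and only if `M` is an Armendariz module. -/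
theorem nagata_armendariz_iff_armendariz_module
    (R : Type*) [CommRing R] [IsDomain R] (σ : R →+* R)
    (M : Type*) [AddCommGroup M] [Module R M] :
    IsArmendarizRing (Nagata R σ M) ↔ IsArmendarizModule R M := by
  constructor
  · -- Armendariz ring → Armendariz module
    intro hS m f hfm i j
    set F : Polynomial (Nagata R σ M) :=
      ⟨⟨Finsupp.mapRange (fun x => (((0 : R), x) : Nagata R σ M)) rfl m.coeff⟩⟩ with hF
    set G : Polynomial (Nagata R σ M) := f.map (Nagata.inlHom σ M) with hG
    have hFc : ∀ k, F.coeff k = (((0 : R), m.coeff k) : Nagata R σ M) := fun k => by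
      simp [hF, Polynomial.coeff, Finsupp.mapRange_apply]; rfl
    have hGc : ∀ k, G.coeff k = ((f.coeff k, (0 : M)) : Nagata R σ M) := fun k => by
      simp [hG, Polynomial.coeff_map]; rfl
    have hFG : F * G = 0 := by
      ext k
      rw [Polynomial.coeff_mul, Polynomial.coeff_zero]
      refine Nagata.nagata_ext ?_ ?_
      · show (Nagata.fstHom σ M) (∑ x ∈ Finset.HasAntidiagonal.antidiagonal k, F.coeff x.1 * G.coeff x.2) = 0
        rw [map_sum]
        refine Finset.sum_eq_zero fun x _ => ?_
        show (F.coeff x.1 * G.coeff x.2).1 = 0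
        rw [Nagata.mul_fst', hFc, hGc]
        exact zero_mul _
      · show (Nagata.sndHom σ M) (∑ x ∈ Finset.HasAntidiagonal.antidiagonal k, F.coeff x.1 * G.coeff x.2) = 0
        rw [map_sum]
        have hz : (f • m).coeff k = 0 := by rw [hfm]; rfl
        rw [PolynomialModule.smul_apply] at hz
        rw [← hz, ← Finset.Nat.sum_antidiagonal_swap (n := k)
          (f := fun p => f.coeff p.1 • m.coeff p.2)]
        refine Finset.sum_congr rfl fun x _ => ?_
        show (F.coeff x.1 * G.coeff x.2).2 = f.coeff x.2 • m.coeff x.1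
        rw [Nagata.mul_snd', hFc, hGc]
        simp
    have := hS F G hFG i j
    have h2 := congrArg Prod.snd this
    rw [Nagata.mul_snd', hFc, hGc, Nagata.zero_snd'] at h2
    simpa using h2
  · -- Armendariz module → Armendariz ring
    intro hM f g hfg i j
    have h1 : f.map (Nagata.fstHom σ M) * g.map (Nagata.fstHom σ M) = 0 := by
      rw [← Polynomial.map_mul, hfg, Polynomial.map_zero]
    have hsnd : ∀ k, ∑ x ∈ Finset.HasAntidiagonal.antidiagonal k,
        (σ (f.coeff x.1).1 • (g.coeff x.2).2 + (g.coeff x.2).1 • (f.coeff x.1).2) = 0 := by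
      intro k
      have : (f * g).coeff k = 0 := by rw [hfg, Polynomial.coeff_zero]
      rw [Polynomial.coeff_mul] at this
      have h2 := congrArg (Nagata.sndHom σ M) this
      rw [map_sum, map_zero] at h2
      exact h2
    rcases mul_eq_zero.mp h1 with hf1 | hg1
    · -- all first components of f vanish
      have hf0 : ∀ k, (f.coeff k).1 = 0 := fun k => by
        have := congrArg (fun p => Polynomial.coeff p k) hf1
        exact (by simpa [Polynomial.coeff_map] using this : (Nagata.fstHom σ M) (f.coeff k) = 0)
      set mM : PolynomialModule R M :=
        PolynomialModule.ofCoeff R (Finsupp.mapRange Prod.snd rfl f.toFinsupp.coeff : ℕ →₀ M) with hmM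
      have hmMc : ∀ k, mM.coeff k = (f.coeff k).2 := fun k => by
        simp [hmM, Finsupp.mapRange_apply]; rfl
      have hz : g.map (Nagata.fstHom σ M) • mM = 0 := by
        refine PolynomialModule.ext (DFunLike.ext _ _ fun k => ?_)
        rw [PolynomialModule.smul_apply]
        have := hsnd k
        simp only [hf0, map_zero, zero_smul, zero_add] at this
        rw [show (0 : PolynomialModule R M).coeff k = 0 from rfl, ← this,
          ← Finset.Nat.sum_antidiagonal_swap (n := k)
          (f := fun p => (g.map (Nagata.fstHom σ M)).coeff p.1 • mM.coeff p.2)]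
        refine Finset.sum_congr rfl fun x _ => ?_
        rw [Polynomial.coeff_map, hmMc]
        rfl
      have key := hM mM (g.map (Nagata.fstHom σ M)) hz i j
      rw [Polynomial.coeff_map, hmMc] at key
      refine Nagata.nagata_ext ?_ ?_
      · rw [Nagata.mul_fst', hf0, zero_mul, Nagata.zero_fst']
      · rw [Nagata.mul_snd', hf0, map_zero, zero_smul, zero_add, Nagata.zero_snd']
        exact key
    · -- all first components of g vanish
      have hg0 : ∀ k, (g.coeff k).1 = 0 := fun k => by
        have := congrArg (fun p => Polynomial.coeff p k) hg1
        exact (by simpa [Polynomial.coeff_map] using this : (Nagata.fstHom σ M) (g.coeff k) = 0)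
      set nM : PolynomialModule R M :=
        PolynomialModule.ofCoeff R (Finsupp.mapRange Prod.snd rfl g.toFinsupp.coeff : ℕ →₀ M) with hnM
      have hnMc : ∀ k, nM.coeff k = (g.coeff k).2 := fun k => by
        simp [hnM, Finsupp.mapRange_apply]; rfl
      set fσ : Polynomial R := (f.map (Nagata.fstHom σ M)).map σ with hfσ
      have hfσc : ∀ k, fσ.coeff k = σ (f.coeff k).1 := fun k => by
        simp [hfσ, Polynomial.coeff_map]; rfl
      have hz : fσ • nM = 0 := by
        refine PolynomialModule.ext (DFunLike.ext _ _ fun k => ?_)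
        rw [PolynomialModule.smul_apply]
        have := hsnd k
        simp only [hg0, zero_smul, add_zero] at this
        rw [show (0 : PolynomialModule R M).coeff k = 0 from rfl, ← this]
        refine Finset.sum_congr rfl fun x _ => ?_
        rw [hfσc, hnMc]
      have key := hM nM fσ hz j i
      rw [hfσc, hnMc] at key
      refine Nagata.nagata_ext ?_ ?_
      · rw [Nagata.mul_fst', hg0, mul_zero, Nagata.zero_fst']
      · rw [Nagata.mul_snd', hg0, zero_smul, add_zero, Nagata.zero_snd']
        exact key
end

section
/- Let R be a commutative domain, σ a ring endomorphism of R, and M a torsion-free R-module. Then the Nagata extension R⊕_σM is an Armendariz ring. -/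
private lemma torsionfree_armendariz_aux {R : Type*} [CommRing R] [IsDomain R]
    {M : Type*} [AddCommGroup M] [Module R M]
    (htf : ∀ (a : R) (m : M), a • m = 0 → a = 0 ∨ m = 0)
    (p : Polynomial R) (q : ℕ →₀ M)
    (h : ∀ n, ∑ x ∈ Finset.HasAntidiagonal.antidiagonal n, p.coeff x.1 • q x.2 = 0) :
    p = 0 ∨ q = 0 := by
  by_contra hc
  push_neg at hc
  obtain ⟨hp, hq⟩ := hc
  have hq' : q.support.Nonempty := Finsupp.support_nonempty_iff.mpr hq
  set j₀ := q.support.max' hq' with hj₀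
  have hmem : (p.natDegree, j₀) ∈ Finset.HasAntidiagonal.antidiagonal (p.natDegree + j₀) :=
    Finset.HasAntidiagonal.mem_antidiagonal.mpr rfl
  have key := h (p.natDegree + j₀)
  rw [Finset.sum_eq_single_of_mem _ hmem ?_] at key
  · rcases htf _ _ key with h1 | h2
    · rw [Polynomial.coeff_natDegree] at h1
      exact hp (Polynomial.leadingCoeff_eq_zero.mp h1)
    · exact Finsupp.mem_support_iff.mp (q.support.max'_mem hq') h2
  · rintro ⟨i, j⟩ hb hne
    have hij : i + j = p.natDegree + j₀ := Finset.HasAntidiagonal.mem_antidiagonal.mp hb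
    rcases lt_or_ge p.natDegree i with hlt | hle
    · rw [Polynomial.coeff_eq_zero_of_natDegree_lt hlt, zero_smul]
    · have hne' : ¬(i = p.natDegree ∧ j = j₀) := by
        rintro ⟨h1, h2⟩
        exact hne (by simp [h1, h2])
      have hj : j₀ < j := by omega
      have hqj : q j = 0 := by
        by_contra hqj
        have := q.support.le_max' j (Finsupp.mem_support_iff.mpr hqj)
        omega
      rw [hqj, smul_zero]

/-- If `R` is a commutative domain and `M` is a torsion-free `R`-module, then the Nagata
extension `R ⊕_σ M` is an Armendariz ring. -/
theorem nagata_armendariz_of_torsionFree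
    (R : Type*) [CommRing R] [IsDomain R] (σ : R →+* R)
    (M : Type*) [AddCommGroup M] [Module R M]
    (htf : ∀ (a : R) (m : M), a • m = 0 → a = 0 ∨ m = 0) :
    IsArmendarizRing (Nagata R σ M) := by
  intro f g hfg i j
  -- the first-component ring homomorphism
  let fstHom : Nagata R σ M →+* R :=
    { toFun := fun x => x.1
      map_one' := rfl
      map_mul' := fun _ _ => rfl
      map_zero' := rfl
      map_add' := fun _ _ => rfl }
  -- the second-component additive homomorphism
  let sndHom : Nagata R σ M →+ M :=
    { toFun := fun x => x.2
      map_zero' := rfl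
      map_add' := fun _ _ => rfl }
  have hAB : (f.map fstHom) * (g.map fstHom) = 0 := by
    rw [← Polynomial.map_mul, hfg, Polynomial.map_zero]
  -- the second components of the coefficients, as finitely supported functions
  let qf : ℕ →₀ M := f.toFinsupp.coeff.mapRange (fun x => x.2) rfl
  let qg : ℕ →₀ M := g.toFinsupp.coeff.mapRange (fun x => x.2) rfl
  have hqf : ∀ k, qf k = (f.coeff k).2 := fun k => Finsupp.mapRange_apply
  have hqg : ∀ k, qg k = (g.coeff k).2 := fun k => Finsupp.mapRange_apply
  -- the second-component equation obtained from `f * g = 0`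
  have hsnd : ∀ n, ∑ x ∈ Finset.HasAntidiagonal.antidiagonal n,
      (σ (f.coeff x.1).1 • (g.coeff x.2).2 + (g.coeff x.2).1 • (f.coeff x.1).2) = 0 := by
    intro n
    have h0 : (f * g).coeff n = 0 := by rw [hfg, Polynomial.coeff_zero]
    rw [Polynomial.coeff_mul] at h0
    have h1 := congrArg sndHom h0
    rw [map_sum, map_zero] at h1
    exact h1
  rcases mul_eq_zero.mp hAB with hA | hB
  · -- all first components of `f` vanish
    have ha : ∀ k, (f.coeff k).1 = 0 := by
      intro k
      have := Polynomial.ext_iff.mp hA k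
      rwa [Polynomial.coeff_map, Polynomial.coeff_zero] at this
    have hkey : ∀ n, ∑ x ∈ Finset.HasAntidiagonal.antidiagonal n,
        (g.map fstHom).coeff x.1 • qf x.2 = 0 := by
      intro n
      have h2 : ∑ x ∈ Finset.HasAntidiagonal.antidiagonal n, (g.coeff x.2).1 • (f.coeff x.1).2 = 0 := by
        rw [← hsnd n]
        apply Finset.sum_congr rfl
        intro x _
        rw [ha x.1, map_zero, zero_smul, zero_add]
      calc ∑ x ∈ Finset.HasAntidiagonal.antidiagonal n, (g.map fstHom).coeff x.1 • qf x.2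
          = ∑ x ∈ Finset.HasAntidiagonal.antidiagonal n, (g.map fstHom).coeff x.2 • qf x.1 := by
            simpa using
              Finset.Nat.sum_antidiagonal_swap (f := fun x => (g.map fstHom).coeff x.2 • qf x.1)
        _ = ∑ x ∈ Finset.HasAntidiagonal.antidiagonal n, (g.coeff x.2).1 • (f.coeff x.1).2 := by
            apply Finset.sum_congr rfl
            intro x _
            rw [Polynomial.coeff_map, hqf]
            rfl
        _ = 0 := h2
    rcases torsionfree_armendariz_aux htf (g.map fstHom) qf hkey with hb | hm
    · have hb' : ∀ k, (g.coeff k).1 = 0 := by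
        intro k
        have := Polynomial.ext_iff.mp hb k
        rwa [Polynomial.coeff_map, Polynomial.coeff_zero] at this
      refine Prod.ext ?_ ?_
      · show (f.coeff i).1 * (g.coeff j).1 = 0
        rw [ha i, zero_mul]
      · show σ (f.coeff i).1 • (g.coeff j).2 + (g.coeff j).1 • (f.coeff i).2 = 0
        rw [ha i, map_zero, zero_smul, zero_add, hb' j, zero_smul]
    · have hm' : (f.coeff i).2 = 0 := by rw [← hqf, hm]; rfl
      refine Prod.ext ?_ ?_
      · show (f.coeff i).1 * (g.coeff j).1 = 0
        rw [ha i, zero_mul]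
      · show σ (f.coeff i).1 • (g.coeff j).2 + (g.coeff j).1 • (f.coeff i).2 = 0
        rw [ha i, map_zero, zero_smul, zero_add, hm', smul_zero]
  · -- all first components of `g` vanish
    have hb : ∀ k, (g.coeff k).1 = 0 := by
      intro k
      have := Polynomial.ext_iff.mp hB k
      rwa [Polynomial.coeff_map, Polynomial.coeff_zero] at this
    have hkey : ∀ n, ∑ x ∈ Finset.HasAntidiagonal.antidiagonal n,
        (f.map (σ.comp fstHom)).coeff x.1 • qg x.2 = 0 := by
      intro n
      rw [← hsnd n]
      apply Finset.sum_congr rfl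
      intro x _
      rw [hb x.2, zero_smul, add_zero, Polynomial.coeff_map, hqg]
      rfl
    rcases torsionfree_armendariz_aux htf (f.map (σ.comp fstHom)) qg hkey with hsa | hn
    · have hsa' : ∀ k, σ (f.coeff k).1 = 0 := by
        intro k
        have := Polynomial.ext_iff.mp hsa k
        rwa [Polynomial.coeff_map, Polynomial.coeff_zero] at this
      refine Prod.ext ?_ ?_
      · show (f.coeff i).1 * (g.coeff j).1 = 0
        rw [hb j, mul_zero]
      · show σ (f.coeff i).1 • (g.coeff j).2 + (g.coeff j).1 • (f.coeff i).2 = 0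
        rw [hb j, zero_smul, add_zero, hsa' i, zero_smul]
    · have hn' : (g.coeff j).2 = 0 := by rw [← hqg, hn]; rfl
      refine Prod.ext ?_ ?_
      · show (f.coeff i).1 * (g.coeff j).1 = 0
        rw [hb j, mul_zero]
      · show σ (f.coeff i).1 • (g.coeff j).2 + (g.coeff j).1 • (f.coeff i).2 = 0
        rw [hb j, zero_smul, add_zero, hn', smul_zero]
end

section
/- Let R be a commutative ring and σ a ring endomorphism of R such that R satisfies the condition (C_σ^1): for all a, b ∈ R, ab = 0 implies a·σ(b) = 0. Let M be an R-module satisfying the condition (C_σ^2): for all m ∈ M and a ∈ R, (σ(a)·a)·m = 0 implies σ(a)·m = 0. Then the Nagata extension R⊕_σM is a semicommutative ring. -/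
/-- If `R` is a commutative ring satisfying `(C_σ^1)` (`a * b = 0` implies `a * σ b = 0`)
and `M` is an `R`-module satisfying `(C_σ^2)` (`(σ a * a) • m = 0` implies `σ a • m = 0`),
then the Nagata extension `R ⊕_σ M` is a semicommutative ring. -/
theorem nagata_semicommutative_of_C1_C2
    (R : Type*) [CommRing R] (σ : R →+* R)
    (M : Type*) [AddCommGroup M] [Module R M]
    (hC1 : ∀ a b : R, a * b = 0 → a * σ b = 0)
    (hC2 : ∀ (m : M) (a : R), (σ a * a) • m = 0 → σ a • m = 0) :
    IsSemicommutativeRing (Nagata R σ M) := by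
  rintro ⟨a, m⟩ ⟨b, n⟩ h ⟨c, p⟩
  have h1 : a * b = 0 := congrArg Prod.fst h
  have h2 : σ a • n + b • m = 0 := congrArg Prod.snd h
  have h2' : σ a • n = -(b • m) := eq_neg_of_add_eq_zero_left h2
  have hba : b * σ a = 0 := hC1 b a (by rw [mul_comm]; exact h1)
  have hσan : σ a • n = 0 := by
    apply hC2
    rw [mul_comm, mul_smul, h2', smul_neg, smul_smul, h1, zero_smul, neg_zero]
  have hbm : b • m = 0 := by rwa [hσan, zero_add] at h2
  refine Prod.ext ?_ ?_
  · show a * c * b = 0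
    rw [mul_right_comm, h1, zero_mul]
  · show σ (a * c) • n + b • (σ a • p + c • m) = 0
    rw [map_mul, mul_comm, mul_smul, hσan, smul_zero, smul_add, smul_smul, hba,
      zero_smul, smul_comm b c, hbm, smul_zero, add_zero, add_zero]
end

section
/- Let R be a commutative domain, σ a ring endomorphism of R, and M an R-module. Then the Nagata extension R⊕_σM is a semicommutative ring. -/
/-- If `R` is a commutative domain and `M` any `R`-module, then the Nagata extension
`R ⊕_σ M` is a semicommutative ring. -/
theorem nagata_semicommutative_of_isDomain
    (R : Type*) [CommRing R] [IsDomain R] (σ : R →+* R)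
    (M : Type*) [AddCommGroup M] [Module R M] :
    IsSemicommutativeRing (Nagata R σ M) := by
  intro a b h r
  have h1 : a.1 * b.1 = 0 := congrArg Prod.fst h
  have h2 : σ a.1 • b.2 + b.1 • a.2 = 0 := congrArg Prod.snd h
  rcases mul_eq_zero.mp h1 with ha | hb
  · have hm : b.1 • a.2 = 0 := by simpa [ha] using h2
    refine Prod.ext ?_ ?_
    · show a.1 * r.1 * b.1 = 0; rw [ha]; ring
    · show σ (a.1 * r.1) • b.2 + b.1 • (σ a.1 • r.2 + r.1 • a.2) = 0
      rw [ha]; simp [smul_comm b.1 r.1, hm]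
  · have hn : σ a.1 • b.2 = 0 := by simpa [hb] using h2
    refine Prod.ext ?_ ?_
    · show a.1 * r.1 * b.1 = 0; rw [hb]; ring
    · show σ (a.1 * r.1) • b.2 + b.1 • (σ a.1 • r.2 + r.1 • a.2) = 0
      rw [hb, map_mul, mul_comm, mul_smul, hn]; simp
end

section
/- Let D be a commutative domain, R = D[x] the polynomial ring over D, and σ : R → R the ring endomorphism sending f(x) to the constant polynomial f(0). Then the Nagata extension R⊕_σR (with R viewed as a module over itself) is not reversible: (x,1)(0,1) = (0,0) but (0,1)(x,1) = (0,x) ≠ (0,0). -/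
/-- The endomorphism of `D[x]` sending `f(x)` to the constant polynomial `f(0)`. -/
noncomputable def evalZeroHom (D : Type*) [CommRing D] : Polynomial D →+* Polynomial D :=
  (Polynomial.C : D →+* Polynomial D).comp (Polynomial.evalRingHom 0)

/-- Let `D` be a commutative domain, `R = D[x]`, and `σ : R → R` the endomorphism
`f(x) ↦ f(0)`.  Then the Nagata extension `R ⊕_σ R` is not reversible:
`(x, 1) * (0, 1) = (0, 0)`, but `(0, 1) * (x, 1) = (0, x) ≠ (0, 0)`. -/
theorem nagata_evalZero_not_reversible
    (D : Type*) [CommRing D] [IsDomain D] :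
    (Nagata.mk Polynomial.X 1 * Nagata.mk 0 1 :
        Nagata (Polynomial D) (evalZeroHom D) (Polynomial D)) = 0 ∧
    (Nagata.mk 0 1 * Nagata.mk Polynomial.X 1 :
        Nagata (Polynomial D) (evalZeroHom D) (Polynomial D)) = Nagata.mk 0 Polynomial.X ∧
    (Nagata.mk 0 1 * Nagata.mk Polynomial.X 1 :
        Nagata (Polynomial D) (evalZeroHom D) (Polynomial D)) ≠ 0 ∧
    ¬ IsReversibleRing (Nagata (Polynomial D) (evalZeroHom D) (Polynomial D)) := by
  have hσX : evalZeroHom D Polynomial.X = 0 := by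
    simp [evalZeroHom]
  have h1 : (Nagata.mk Polynomial.X 1 * Nagata.mk 0 1 :
      Nagata (Polynomial D) (evalZeroHom D) (Polynomial D)) = 0 := by
    refine Prod.ext ?_ ?_
    · show Polynomial.X * 0 = 0; ring
    · show evalZeroHom D Polynomial.X • (1 : Polynomial D)
          + (0 : Polynomial D) • (1 : Polynomial D) = 0
      rw [hσX]; simp
  have h2 : (Nagata.mk 0 1 * Nagata.mk Polynomial.X 1 :
      Nagata (Polynomial D) (evalZeroHom D) (Polynomial D)) = Nagata.mk 0 Polynomial.X := by
    refine Prod.ext ?_ ?_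
    · show (0 : Polynomial D) * Polynomial.X = 0; ring
    · show evalZeroHom D 0 • (1 : Polynomial D)
          + Polynomial.X • (1 : Polynomial D) = Polynomial.X
      simp [smul_eq_mul]
  have h3 : (Nagata.mk 0 1 * Nagata.mk Polynomial.X 1 :
      Nagata (Polynomial D) (evalZeroHom D) (Polynomial D)) ≠ 0 := by
    rw [h2]
    intro h
    have : (Polynomial.X : Polynomial D) = 0 := congrArg Prod.snd h
    exact Polynomial.X_ne_zero this
  exact ⟨h1, h2, h3, fun hrev => h3 (hrev _ _ h1)⟩
end

section
/- Let R be a commutative ring and M an Armendariz R-module. Let m(x) = Σ_i m_i x^i ∈ M[x] and f(x) = Σ_j a_j x^j, g(x) = Σ_k b_k x^k ∈ R[x]. Then m(x)·f(x)·g(x) = 0 in the R[x]-module M[x] if and only if (a_j·b_k)·m_i = 0 in M for all i, j, k. -/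
/-- If `M` is an Armendariz `R`-module, then for `m(x) ∈ M[x]` and `f(x), g(x) ∈ R[x]`,
`m(x) f(x) g(x) = 0` if and only if `(a_j b_k) • m_i = 0` for all `i, j, k`. -/
theorem armendariz_module_smul_mul_eq_zero_iff
    (R M : Type*) [CommRing R] [AddCommGroup M] [Module R M]
    (hM : IsArmendarizModule R M)
    (m : PolynomialModule R M) (f g : Polynomial R) :
    (f * g) • m = 0 ↔ ∀ i j k, (f.coeff j * g.coeff k) • m.coeff i = 0 := by
  constructor
  · intro h i j k
    rw [mul_smul] at h
    have h1 : ∀ i j, f.coeff j • (g • m).coeff i = 0 := hM (g • m) f h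
    have h2 : g • (f.coeff j • m) = 0 := by
      rw [smul_comm]
      exact PolynomialModule.ext (Finsupp.ext fun n => h1 n j)
    have := hM (f.coeff j • m) g h2 i k
    rw [show (f.coeff j • m).coeff = f.coeff j • m.coeff from rfl, Finsupp.smul_apply, smul_smul, mul_comm] at this
    exact this
  · intro h
    refine PolynomialModule.ext (Finsupp.ext fun n => ?_)
    rw [PolynomialModule.smul_apply]
    simp only [PolynomialModule.coeff_zero, Finsupp.coe_zero, Pi.zero_apply]
    refine Finset.sum_eq_zero fun x _ => ?_
    rw [Polynomial.coeff_mul, Finset.sum_smul]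
    exact Finset.sum_eq_zero fun y _ => h x.2 y.1 y.2
end

section
/- Let R be a commutative ring, σ a ring endomorphism of R, and M an Armendariz R-module satisfying the condition (C_σ^2): for all m ∈ M and a ∈ R, (σ(a)·a)·m = 0 implies σ(a)·m = 0. Then the R[x]-module M[x] satisfies (C_{σ̄}^2), where σ̄ : R[x] → R[x] is the ring endomorphism applying σ to each coefficient (Polynomial.mapRingHom σ): that is, for all m(x) ∈ M[x] and f(x) ∈ R[x], if m(x)·(σ̄(f(x))·f(x)) = 0 in M[x] then m(x)·σ̄(f(x)) = 0 in M[x]. -/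
/-- If `M` is an Armendariz `R`-module satisfying the condition `(C_σ^2)`
(`(σ a * a) • m = 0` implies `σ a • m = 0`), then the `R[x]`-module `M[x]` satisfies the
condition `(C_σ̄^2)`, where `σ̄ : R[x] → R[x]` applies `σ` to every coefficient. -/
theorem polynomialModule_C2_of_armendariz_C2
    (R M : Type*) [CommRing R] [AddCommGroup M] [Module R M] (σ : R →+* R)
    (hM : IsArmendarizModule R M)
    (hC2 : ∀ (m : M) (a : R), (σ a * a) • m = 0 → σ a • m = 0) :
    ∀ (m : PolynomialModule R M) (f : Polynomial R),
      (Polynomial.mapRingHom σ f * f) • m = 0 → (Polynomial.mapRingHom σ f) • m = 0 := by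
  intro m f h
  set g : Polynomial R := Polynomial.mapRingHom σ f with hg
  -- Step 1: from Armendariz applied to (g*f) • m = 0, each coefficient m i satisfies
  -- (g*f).coeff j • m i = 0 for all j.
  have h1 : ∀ i j, (g * f).coeff j • m.coeff i = 0 := hM m (g * f) h
  -- Step 2: prove g.coeff j • m i = 0 for all i j
  have key : ∀ i j, g.coeff j • m.coeff i = 0 := by
    intro i j
    set n := m.coeff i with hn
    -- constant polynomial module element
    set n' : PolynomialModule R M := PolynomialModule.single R 0 n with hn'
    have hgfn' : (g * f) • n' = 0 := by
      refine PolynomialModule.coeff_injective (Finsupp.ext fun k => ?_)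
      rw [hn', PolynomialModule.smul_single_apply, PolynomialModule.coeff_zero, Finsupp.zero_apply]
      simp [hn, h1 i]
    have hfgn' : f • (g • n') = 0 := by
      rw [← mul_smul, mul_comm, hgfn']
    have h2 : ∀ k l, f.coeff l • (g • n').coeff k = 0 := hM (g • n') f hfgn'
    have h3 : ∀ k l, f.coeff l • g.coeff k • n = 0 := by
      intro k l
      have := h2 k l
      rwa [hn', PolynomialModule.smul_single_apply, if_pos (Nat.zero_le k), Nat.sub_zero]
        at this
    have h4 : (σ (f.coeff j) * f.coeff j) • n = 0 := by
      have := h3 j j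
      simp only [hg, Polynomial.coe_mapRingHom, Polynomial.coeff_map] at this
      rwa [mul_smul, smul_comm]
    have := hC2 n (f.coeff j) h4
    simpa only [hg, Polynomial.coe_mapRingHom, Polynomial.coeff_map] using this
  -- Step 3: conclude
  refine PolynomialModule.coeff_injective (Finsupp.ext fun k => ?_)
  rw [PolynomialModule.smul_apply, PolynomialModule.coeff_zero, Finsupp.zero_apply]
  exact Finset.sum_eq_zero fun x _ => key x.2 x.1
end

section
/- Let R be a commutative reduced ring and σ a ring endomorphism of R such that R satisfies the condition (C_σ^1): for all a, b ∈ R, ab = 0 implies a·σ(b) = 0. Then the Nagata extension R⊕_σR (with R viewed as a module over itself) is semicommutative and Armendariz. -/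
theorem armendariz_of_reduced {R : Type*} [CommRing R] [IsReduced R]
    {f g : Polynomial R} (h : f * g = 0) (i j : ℕ) : f.coeff i * g.coeff j = 0 := by
  have hnil : IsNilpotent (f.coeff i * g.coeff j) := by
    rw [nilpotent_iff_mem_prime]
    intro P hP
    haveI : P.IsPrime := hP
    have h2 : f.map (Ideal.Quotient.mk P) * g.map (Ideal.Quotient.mk P) = 0 := by
      rw [← Polynomial.map_mul, h, Polynomial.map_zero]
    rcases mul_eq_zero.mp h2 with h3 | h3
    · have hz : (Ideal.Quotient.mk P) (f.coeff i) = 0 := by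
        rw [← Polynomial.coeff_map, h3, Polynomial.coeff_zero]
      exact P.mul_mem_right _ (Ideal.Quotient.eq_zero_iff_mem.mp hz)
    · have hz : (Ideal.Quotient.mk P) (g.coeff j) = 0 := by
        rw [← Polynomial.coeff_map, h3, Polynomial.coeff_zero]
      exact P.mul_mem_left _ (Ideal.Quotient.eq_zero_iff_mem.mp hz)
  exact hnil.eq_zero

theorem sq_mul_eq_zero_red {R : Type*} [CommRing R] [IsReduced R]
    {x y : R} (h : x * x * y = 0) : x * y = 0 := by
  have h2 : (x * y) ^ 2 = 0 := by
    rw [show (x * y) ^ 2 = (x * x * y) * y by ring, h, zero_mul]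
  exact IsNilpotent.eq_zero ⟨2, h2⟩

instance polyReduced {R : Type*} [CommRing R] [IsReduced R] : IsReduced (Polynomial R) := by
  constructor
  intro p hp
  ext n
  rw [Polynomial.isNilpotent_iff] at hp
  simpa using (hp n).eq_zero

namespace NagataAux

open Polynomial

variable {R : Type*} [CommRing R] (σ : R →+* R)

lemma fst_mul (x y : Nagata R σ R) : (x * y).1 = x.1 * y.1 := rfl

lemma snd_mul (x y : Nagata R σ R) : (x * y).2 = σ x.1 * y.2 + y.1 * x.2 := by
  show σ x.1 • y.2 + y.1 • x.2 = _
  simp [smul_eq_mul]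

lemma fst_zero : ((0 : Nagata R σ R)).1 = 0 := rfl
lemma snd_zero : ((0 : Nagata R σ R)).2 = 0 := rfl

/-- First projection as a ring hom. -/
def fstHom : Nagata R σ R →+* R where
  toFun x := x.1
  map_one' := rfl
  map_mul' _ _ := rfl
  map_zero' := rfl
  map_add' _ _ := rfl

@[simp] lemma fstHom_apply (x : Nagata R σ R) : fstHom σ x = x.1 := rfl

/-- Second projection as an additive hom. -/
def sndHom : Nagata R σ R →+ R where
  toFun x := x.2
  map_zero' := rfl
  map_add' _ _ := rfl

lemma fst_sum' {ι : Type*} (s : Finset ι) (F : ι → Nagata R σ R) :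
    (∑ p ∈ s, F p).1 = ∑ p ∈ s, (F p).1 := map_sum (fstHom σ) F s

lemma snd_sum' {ι : Type*} (s : Finset ι) (F : ι → Nagata R σ R) :
    (∑ p ∈ s, F p).2 = ∑ p ∈ s, (F p).2 := map_sum (sndHom σ) F s

/-- Second components of a polynomial over the Nagata extension. -/
noncomputable def P2 (f : Polynomial (Nagata R σ R)) : Polynomial R :=
  ⟨.ofCoeff (f.toFinsupp.coeff.mapRange (fun x => x.2) rfl)⟩

lemma coeff_P2 (f : Polynomial (Nagata R σ R)) (n : ℕ) :
    (P2 σ f).coeff n = (f.coeff n).2 := rfl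

end NagataAux

open Polynomial Finset NagataAux

/-- If `R` is a commutative reduced ring satisfying the condition `(C_σ^1)`
(`a * b = 0` implies `a * σ b = 0`), then the Nagata extension `R ⊕_σ R` is
semicommutative and Armendariz. -/
theorem nagata_self_semicommutative_and_armendariz
    (R : Type*) [CommRing R] [IsReduced R] (σ : R →+* R)
    (hC1 : ∀ a b : R, a * b = 0 → a * σ b = 0) :
    IsSemicommutativeRing (Nagata R σ R) ∧ IsArmendarizRing (Nagata R σ R) := by
  have key : ∀ x y : Nagata R σ R, x * y = 0 →
      x.1 * y.1 = 0 ∧ σ x.1 * y.2 = 0 ∧ y.1 * x.2 = 0 := by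
    intro x y hxy
    have h1 : x.1 * y.1 = 0 := by rw [← fst_mul σ, hxy]; rfl
    have h2 : σ x.1 * y.2 + y.1 * x.2 = 0 := by rw [← snd_mul σ, hxy]; rfl
    have hσ : y.1 * σ x.1 = 0 := hC1 y.1 x.1 (by rwa [mul_comm])
    have hsq : σ x.1 * σ x.1 * y.2 = 0 := by
      linear_combination σ x.1 * h2 - x.2 * hσ
    have hA : σ x.1 * y.2 = 0 := sq_mul_eq_zero_red hsq
    exact ⟨h1, hA, by linear_combination h2 - hA⟩
  constructor
  · -- semicommutative
    intro x y hxy r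
    obtain ⟨h1, hA, hC⟩ := key x y hxy
    have hB : y.1 * σ x.1 = 0 := hC1 y.1 x.1 (by rwa [mul_comm])
    refine Prod.ext ?_ ?_
    · rw [fst_mul σ, fst_mul σ, fst_zero]
      linear_combination r.1 * h1
    · rw [snd_mul σ, snd_mul σ, fst_mul σ, snd_zero, map_mul]
      linear_combination σ r.1 * hA + r.2 * hB + r.1 * hC
  · -- Armendariz
    intro f g h i j
    set F1 : Polynomial R := f.map (fstHom σ) with hF1
    set G1 : Polynomial R := g.map (fstHom σ) with hG1
    set F2 : Polynomial R := P2 σ f with hF2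
    set G2 : Polynomial R := P2 σ g with hG2
    set Sσ : Polynomial R := F1.map σ with hSσ
    have cF1 : ∀ n, F1.coeff n = (f.coeff n).1 := fun n => by
      rw [hF1, coeff_map, fstHom_apply]
    have cG1 : ∀ n, G1.coeff n = (g.coeff n).1 := fun n => by
      rw [hG1, coeff_map, fstHom_apply]
    have cSσ : ∀ n, Sσ.coeff n = σ ((f.coeff n).1) := fun n => by
      rw [hSσ, coeff_map, cF1]
    have hcoeff : ∀ k, ((f * g).coeff k).1 = 0 ∧ ((f * g).coeff k).2 = 0 := by
      intro k; rw [h]; exact ⟨rfl, rfl⟩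
    have hfst : F1 * G1 = 0 := by
      ext k
      have h0 := (hcoeff k).1
      rw [coeff_mul, fst_sum' σ] at h0
      rw [coeff_mul, coeff_zero, ← h0]
      exact Finset.sum_congr rfl fun p _ => by rw [cF1, cG1, fst_mul σ]
    have hsnd : Sσ * G2 + F2 * G1 = 0 := by
      ext k
      have h0 := (hcoeff k).2
      rw [coeff_mul, snd_sum' σ] at h0
      rw [coeff_add, coeff_mul, coeff_mul, coeff_zero, ← Finset.sum_add_distrib, ← h0]
      refine Finset.sum_congr rfl fun p _ => ?_
      rw [cSσ, coeff_P2, coeff_P2, cG1, snd_mul σ]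
      ring
    have hσb : Sσ * G1 = 0 := by
      ext k
      rw [coeff_mul, coeff_zero]
      refine Finset.sum_eq_zero fun p _ => ?_
      rw [cSσ, cG1]
      have hba : (g.coeff p.2).1 * (f.coeff p.1).1 = 0 := by
        have h4 := armendariz_of_reduced hfst p.1 p.2
        rw [cF1, cG1] at h4
        linear_combination h4
      linear_combination hC1 _ _ hba
    have hsq : Sσ * Sσ * G2 = 0 := by linear_combination Sσ * hsnd - F2 * hσb
    have hσn : Sσ * G2 = 0 := sq_mul_eq_zero_red hsq
    have hbm : F2 * G1 = 0 := by linear_combination hsnd - hσn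
    refine Prod.ext ?_ ?_
    · rw [fst_mul σ, fst_zero]
      have h4 := armendariz_of_reduced hfst i j
      rwa [cF1, cG1] at h4
    · rw [snd_mul σ, snd_zero]
      have h1 := armendariz_of_reduced hσn i j
      rw [cSσ, coeff_P2] at h1
      have h2 := armendariz_of_reduced hbm i j
      rw [coeff_P2, cG1] at h2
      linear_combination h1 + h2
end
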